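/- Let M₁ and M₂ be real symmetric n×n matrices, with eigenvalues of M₁ listed in nonincreasing order λ₁(M₁) ≥ ⋯ ≥ λ_n(M₁) ≥ 0 (so M₁ is positive semidefinite), and eigenvalues of M₂ listed in nonincreasing order λ₁(M₂) ≥ ⋯ ≥ λ_n(M₂). Fix i ∈ {1,…,n} and ϑ > 0, and assume min( λ_{i−1}(M₁) − λ_i(M₁), λ_i(M₁) − λ_{i+1}(M₁) ) ≥ ϑ, with the conventions λ₀(M₁) = +∞ and λ_{n+1}(M₁) = 0. If u, û ∈ ℝⁿ are unit vectors satisfying M₁ u = λ_i(M₁) u, M₂ û = λ_i(M₂) û, and ⟨u, û⟩ ≥ 0, then ‖û − u‖₂ ≤ 2^{3/2} ϑ^{−1} ‖M₁ − M₂‖_op. -/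

import Mathlib

open Matrix Polynomial Finset
open scoped RealInnerProductSpace

/-- The ℓ2 → ℓ2 operator (spectral) norm of a real square matrix:
`‖A‖_op = sup_{‖x‖₂ = 1} ‖Ax‖₂`. -/
noncomputable def opNorm {n : ℕ} (A : Matrix (Fin n) (Fin n) ℝ) : ℝ :=
  sSup {y : ℝ | ∃ x : Fin n → ℝ, (∑ k, x k ^ 2 = 1) ∧
    y = Real.sqrt (∑ k, (A.mulVec x k) ^ 2)}

namespace DK

variable {n : ℕ}

lemma opNorm_bound (A : Matrix (Fin n) (Fin n) ℝ) (x : Fin n → ℝ)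
    (hx : ∑ k, x k ^ 2 = 1) :
    Real.sqrt (∑ k, (A.mulVec x k) ^ 2) ≤ opNorm A := by
  apply le_csSup
  · refine ⟨Real.sqrt (∑ k, ∑ l, (A k l) ^ 2), ?_⟩
    rintro y ⟨z, hz, rfl⟩
    apply Real.sqrt_le_sqrt
    apply Finset.sum_le_sum
    intro k _
    have h := Finset.sum_mul_sq_le_sq_mul_sq Finset.univ (fun l => A k l) z
    rw [hz, mul_one] at h
    simpa [Matrix.mulVec, dotProduct] using h
  · exact ⟨x, hx, rfl⟩

lemma enorm_eq (x : EuclideanSpace ℝ (Fin n)) : ‖x‖ = Real.sqrt (∑ k, x k ^ 2) := by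
  rw [EuclideanSpace.norm_eq]
  congr 1
  exact Finset.sum_congr rfl fun k _ => by rw [Real.norm_eq_abs, sq_abs]

lemma inner_eq_sum (x y : EuclideanSpace ℝ (Fin n)) : ⟪x, y⟫ = ∑ k, x k * y k := by
  simp [PiLp.inner_apply, RCLike.inner_apply, conj_trivial]
  exact Finset.sum_congr rfl fun k _ => mul_comm _ _

lemma isHermitian_of_isSymm {A : Matrix (Fin n) (Fin n) ℝ} (hA : A.IsSymm) : A.IsHermitian := by
  rwa [Matrix.IsHermitian, conjTranspose, Matrix.IsSymm] at *

lemma symm_dot {A : Matrix (Fin n) (Fin n) ℝ} (hA : A.IsSymm) (x y : Fin n → ℝ) :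
    ∑ k, (A.mulVec x) k * y k = ∑ k, x k * (A.mulVec y) k := by
  simp only [Matrix.mulVec, dotProduct, Finset.sum_mul, Finset.mul_sum]
  rw [Finset.sum_comm]
  refine Finset.sum_congr rfl fun k _ => Finset.sum_congr rfl fun l _ => ?_
  rw [← hA.apply k l]
  ring

lemma inner_basis_mulVec {A : Matrix (Fin n) (Fin n) ℝ} (hA : A.IsSymm)
    (hH : A.IsHermitian) (x : EuclideanSpace ℝ (Fin n)) (j : Fin n) :
    ⟪hH.eigenvectorBasis j, WithLp.toLp 2 (A.mulVec x)⟫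
      = hH.eigenvalues j * ⟪hH.eigenvectorBasis j, x⟫ := by
  have hm : (A.mulVec (hH.eigenvectorBasis j) : Fin n → ℝ)
      = fun k => hH.eigenvalues j * hH.eigenvectorBasis j k := by
    funext k
    exact congrFun (hH.mulVec_eigenvectorBasis j) k
  rw [inner_eq_sum, inner_eq_sum, ← symm_dot hA, hm, Finset.mul_sum]
  exact Finset.sum_congr rfl fun k _ => by ring

lemma parseval {A : Matrix (Fin n) (Fin n) ℝ} (hH : A.IsHermitian)
    (x : EuclideanSpace ℝ (Fin n)) :
    ∑ k, x k ^ 2 = ∑ j, ⟪hH.eigenvectorBasis j, x⟫ ^ 2 := by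
  have h := hH.eigenvectorBasis.sum_inner_mul_inner x x
  calc ∑ k, x k ^ 2 = ⟪x, x⟫ := by
        rw [inner_eq_sum]; exact Finset.sum_congr rfl fun k _ => (sq (x k)).symm ▸ by ring
    _ = ∑ j, ⟪hH.eigenvectorBasis j, x⟫ ^ 2 := by
        rw [← h]
        exact Finset.sum_congr rfl fun j _ => by
          rw [real_inner_comm x (hH.eigenvectorBasis j)]; ring

lemma charpoly_similar (V D : Matrix (Fin n) (Fin n) ℝ)
    (hV : V * star V = 1) :
    (V * D * star V).charpoly = D.charpoly := by
  have hmm : ∀ P Q : Matrix (Fin n) (Fin n) ℝ,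
      (C : ℝ →+* ℝ[X]).mapMatrix (P * Q) = C.mapMatrix P * C.mapMatrix Q :=
    fun P Q => map_mul _ _ _
  have hone : (C : ℝ →+* ℝ[X]).mapMatrix V * C.mapMatrix (star V) = 1 := by
    rw [← hmm, hV, _root_.map_one]
  have hcomm : ∀ P : Matrix (Fin n) (Fin n) ℝ[X],
      Matrix.scalar (Fin n) (X : ℝ[X]) * P = P * Matrix.scalar (Fin n) (X : ℝ[X]) :=
    fun P => (Matrix.scalar_commute (X : ℝ[X]) (fun r => Commute.all _ _) P).eq
  have key : charmatrix (V * D * star V) =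
      C.mapMatrix V * charmatrix D * C.mapMatrix (star V) := by
    rw [charmatrix, charmatrix, mul_sub, sub_mul, hmm, hmm]
    congr 1
    rw [← hcomm, mul_assoc, hone, mul_one]
  rw [Matrix.charpoly, Matrix.charpoly, key, det_mul, det_mul]
  have hdet : ((C : ℝ →+* ℝ[X]).mapMatrix V).det * ((C : ℝ →+* ℝ[X]).mapMatrix (star V)).det = 1 := by
    rw [← det_mul, hone, det_one]
  calc ((C : ℝ →+* ℝ[X]).mapMatrix V).det * (charmatrix D).det * ((C : ℝ →+* ℝ[X]).mapMatrix (star V)).det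
      = (charmatrix D).det * (((C : ℝ →+* ℝ[X]).mapMatrix V).det * ((C : ℝ →+* ℝ[X]).mapMatrix (star V)).det) := by ring
    _ = (charmatrix D).det := by rw [hdet, mul_one]

lemma charpoly_eq_prod {A : Matrix (Fin n) (Fin n) ℝ} (hH : A.IsHermitian) :
    A.charpoly = ∏ j, (X - C (hH.eigenvalues j)) := by
  have h1 := hH.spectral_theorem
  have h2 : A.charpoly = (Matrix.diagonal (RCLike.ofReal ∘ hH.eigenvalues) : Matrix (Fin n) (Fin n) ℝ).charpoly := by
    conv_lhs => rw [h1]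
    exact charpoly_similar _ _ (Matrix.mem_unitaryGroup_iff.mp (hH.eigenvectorUnitary).2)
  rw [h2, Matrix.charpoly_of_upperTriangular _ (Matrix.blockTriangular_diagonal _)]
  exact Finset.prod_congr rfl fun j _ => by simp

lemma eigenvalues_multiset {A : Matrix (Fin n) (Fin n) ℝ} (hH : A.IsHermitian)
    (lam : ℕ → ℝ) (hchar : A.charpoly = ∏ j ∈ Finset.Icc 1 n, (X - C (lam j))) :
    Multiset.map lam (Finset.Icc 1 n).val = Multiset.map hH.eigenvalues Finset.univ.val := by
  have e1 : (∏ j ∈ Finset.Icc 1 n, (X - C (lam j)))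
      = ((Multiset.map lam (Finset.Icc 1 n).val).map fun a => X - C a).prod := by
    rw [Multiset.map_map]; rfl
  have e2 : (∏ j : Fin n, (X - C (hH.eigenvalues j)))
      = ((Multiset.map hH.eigenvalues Finset.univ.val).map fun a => X - C a).prod := by
    rw [Multiset.map_map]; rfl
  have h := (hchar.symm.trans (charpoly_eq_prod hH))
  rw [e1, e2] at h
  have := congrArg Polynomial.roots h
  rwa [Polynomial.roots_multiset_prod_X_sub_C, Polynomial.roots_multiset_prod_X_sub_C] at this

lemma card_filter_eq {lam : ℕ → ℝ} {ev : Fin n → ℝ}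
    (h : Multiset.map lam (Finset.Icc 1 n).val = Multiset.map ev Finset.univ.val)
    (p : ℝ → Prop) [DecidablePred p] :
    (Finset.univ.filter fun k => p (ev k)).card = ((Finset.Icc 1 n).filter fun j => p (lam j)).card := by
  have h2 := congrArg (Multiset.countP p) h
  rw [Multiset.countP_map, Multiset.countP_map] at h2
  show Multiset.card (Finset.univ.filter fun k => p (ev k)).val
      = Multiset.card ((Finset.Icc 1 n).filter fun j => p (lam j)).val
  rw [Finset.filter_val, Finset.filter_val]
  exact h2.symm

lemma coord_zero_of_mem_span (b : OrthonormalBasis (Fin n) ℝ (EuclideanSpace ℝ (Fin n)))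
    (S : Finset (Fin n)) (x : EuclideanSpace ℝ (Fin n))
    (hx : x ∈ Submodule.span ℝ (Set.range fun k : S => (b k : EuclideanSpace ℝ (Fin n))))
    (j : Fin n) (hj : j ∉ S) : ⟪b j, x⟫ = 0 := by
  induction hx using Submodule.span_induction with
  | mem y hy =>
      obtain ⟨⟨l, hl⟩, rfl⟩ := hy
      exact b.orthonormal.2 fun h : j = l => hj (h ▸ hl)
  | zero => exact inner_zero_right _
  | add y z _ _ hy hz => rw [inner_add_right, hy, hz, add_zero]
  | smul a y _ hy => rw [real_inner_smul_right, hy, mul_zero]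

lemma finrank_span_basis (b : OrthonormalBasis (Fin n) ℝ (EuclideanSpace ℝ (Fin n)))
    (S : Finset (Fin n)) :
    Module.finrank ℝ (Submodule.span ℝ (Set.range fun k : S => (b k : EuclideanSpace ℝ (Fin n)))) = S.card := by
  exact (finrank_span_eq_card (b.orthonormal.linearIndependent.comp Subtype.val
    Subtype.val_injective)).trans (Fintype.card_coe S)

lemma quad_bound_ge {B : Matrix (Fin n) (Fin n) ℝ} (hB : B.IsSymm) (hHB : B.IsHermitian)
    (μ : ℝ) (S : Finset (Fin n)) (hS : ∀ k ∈ S, μ ≤ hHB.eigenvalues k)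
    (y : EuclideanSpace ℝ (Fin n)) (hy : ∑ k, y k ^ 2 = 1)
    (hmem : y ∈ Submodule.span ℝ (Set.range fun k : S => (hHB.eigenvectorBasis k : EuclideanSpace ℝ (Fin n)))) :
    μ ≤ ∑ k, y k * (B.mulVec y) k := by
  set d : Fin n → ℝ := fun j => ⟪hHB.eigenvectorBasis j, y⟫ with hd
  have hzero : ∀ j ∈ Finset.univ, j ∉ S → d j = 0 := fun j _ hj =>
    coord_zero_of_mem_span hHB.eigenvectorBasis S y hmem j hj
  have hsum : ∑ j, d j ^ 2 = 1 := by rw [← parseval hHB y]; exact hy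
  have hsumS : ∑ j ∈ S, d j ^ 2 = 1 := by
    rw [← hsum]
    exact Finset.sum_subset (Finset.subset_univ S)
      (fun j h1 h2 => by rw [hzero j h1 h2]; ring)
  have hq : ∑ k, y k * (B.mulVec y) k = ∑ j, hHB.eigenvalues j * d j ^ 2 := by
    rw [show ∑ k, y k * (B.mulVec y) k = ⟪y, WithLp.toLp 2 (B.mulVec y)⟫ from (inner_eq_sum y (WithLp.toLp 2 (B.mulVec y))).symm,
      ← hHB.eigenvectorBasis.sum_inner_mul_inner y]
    refine Finset.sum_congr rfl fun j _ => ?_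
    rw [inner_basis_mulVec hB hHB,
      show ⟪y, hHB.eigenvectorBasis j⟫ = d j from real_inner_comm _ _]
    ring
  rw [hq, ← Finset.sum_subset (Finset.subset_univ S)
    (fun j h1 h2 => by rw [hzero j h1 h2]; ring)]
  calc μ = ∑ j ∈ S, μ * d j ^ 2 := by rw [← Finset.mul_sum, hsumS, mul_one]
    _ ≤ ∑ j ∈ S, hHB.eigenvalues j * d j ^ 2 :=
        Finset.sum_le_sum fun j hj => mul_le_mul_of_nonneg_right (hS j hj) (sq_nonneg _)

lemma quad_bound_le {B : Matrix (Fin n) (Fin n) ℝ} (hB : B.IsSymm) (hHB : B.IsHermitian)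
    (μ : ℝ) (S : Finset (Fin n)) (hS : ∀ k ∈ S, hHB.eigenvalues k ≤ μ)
    (y : EuclideanSpace ℝ (Fin n)) (hy : ∑ k, y k ^ 2 = 1)
    (hmem : y ∈ Submodule.span ℝ (Set.range fun k : S => (hHB.eigenvectorBasis k : EuclideanSpace ℝ (Fin n)))) :
    ∑ k, y k * (B.mulVec y) k ≤ μ := by
  set d : Fin n → ℝ := fun j => ⟪hHB.eigenvectorBasis j, y⟫ with hd
  have hzero : ∀ j ∈ Finset.univ, j ∉ S → d j = 0 := fun j _ hj =>
    coord_zero_of_mem_span hHB.eigenvectorBasis S y hmem j hj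
  have hsum : ∑ j, d j ^ 2 = 1 := by rw [← parseval hHB y]; exact hy
  have hsumS : ∑ j ∈ S, d j ^ 2 = 1 := by
    rw [← hsum]
    exact Finset.sum_subset (Finset.subset_univ S)
      (fun j h1 h2 => by rw [hzero j h1 h2]; ring)
  have hq : ∑ k, y k * (B.mulVec y) k = ∑ j, hHB.eigenvalues j * d j ^ 2 := by
    rw [show ∑ k, y k * (B.mulVec y) k = ⟪y, WithLp.toLp 2 (B.mulVec y)⟫ from (inner_eq_sum y (WithLp.toLp 2 (B.mulVec y))).symm,
      ← hHB.eigenvectorBasis.sum_inner_mul_inner y]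
    refine Finset.sum_congr rfl fun j _ => ?_
    rw [inner_basis_mulVec hB hHB,
      show ⟪y, hHB.eigenvectorBasis j⟫ = d j from real_inner_comm _ _]
    ring
  rw [hq, ← Finset.sum_subset (Finset.subset_univ S)
    (fun j h1 h2 => by rw [hzero j h1 h2]; ring)]
  calc ∑ j ∈ S, hHB.eigenvalues j * d j ^ 2 ≤ ∑ j ∈ S, μ * d j ^ 2 :=
        Finset.sum_le_sum fun j hj => mul_le_mul_of_nonneg_right (hS j hj) (sq_nonneg _)
    _ = μ := by rw [← Finset.mul_sum, hsumS, mul_one]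

lemma sqrt_tri (x y : Fin n → ℝ) :
    Real.sqrt (∑ k, (x k + y k) ^ 2) ≤ Real.sqrt (∑ k, x k ^ 2) + Real.sqrt (∑ k, y k ^ 2) := by
  have h := @norm_add_le (EuclideanSpace ℝ (Fin n)) _ (WithLp.toLp 2 x) (WithLp.toLp 2 y)
  rw [enorm_eq, enorm_eq, enorm_eq] at h
  exact le_of_le_of_eq (le_of_eq rfl) rfl |>.trans h

lemma sqrt_smul (t : ℝ) (x : Fin n → ℝ) :
    Real.sqrt (∑ k, (t * x k) ^ 2) = |t| * Real.sqrt (∑ k, x k ^ 2) := by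
  have e : ∑ k, (t * x k) ^ 2 = t ^ 2 * ∑ k, x k ^ 2 := by
    rw [Finset.mul_sum]; exact Finset.sum_congr rfl fun k _ => by ring
  rw [e, Real.sqrt_mul (sq_nonneg t), Real.sqrt_sq_eq_abs]

lemma weyl_aux (A B : Matrix (Fin n) (Fin n) ℝ) (hA : A.IsSymm) (hB : B.IsSymm)
    (a b : ℕ → ℝ)
    (hsa : ∀ j k : ℕ, 1 ≤ j → j ≤ k → k ≤ n → a k ≤ a j)
    (hsb : ∀ j k : ℕ, 1 ≤ j → j ≤ k → k ≤ n → b k ≤ b j)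
    (hca : A.charpoly = ∏ j ∈ Finset.Icc 1 n, (X - C (a j)))
    (hcb : B.charpoly = ∏ j ∈ Finset.Icc 1 n, (X - C (b j)))
    (i : ℕ) (hi1 : 1 ≤ i) (hin : i ≤ n) (ε : ℝ)
    (hq : ∀ y : Fin n → ℝ, ∑ k, y k ^ 2 = 1 →
      ∑ k, y k * (B.mulVec y) k ≤ ∑ k, y k * (A.mulVec y) k + ε) :
    b i ≤ a i + ε := by
  classical
  have hHA := isHermitian_of_isSymm hA
  have hHB := isHermitian_of_isSymm hB
  set SB := Finset.univ.filter (fun k => b i ≤ hHB.eigenvalues k) with hSBdef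
  set SA := Finset.univ.filter (fun k => hHA.eigenvalues k ≤ a i) with hSAdef
  have hcardB : i ≤ SB.card := by
    rw [hSBdef, card_filter_eq (eigenvalues_multiset hHB b hcb) (fun t => b i ≤ t)]
    calc i = (Finset.Icc 1 i).card := by rw [Nat.card_Icc]; omega
      _ ≤ _ := Finset.card_le_card (by
          intro j hj
          rw [Finset.mem_Icc] at hj
          rw [Finset.mem_filter, Finset.mem_Icc]
          exact ⟨⟨hj.1, le_trans hj.2 hin⟩, hsb j i hj.1 hj.2 hin⟩)
  have hcardA : n + 1 - i ≤ SA.card := by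
    rw [hSAdef, card_filter_eq (eigenvalues_multiset hHA a hca) (fun t => t ≤ a i)]
    calc n + 1 - i = (Finset.Icc i n).card := by rw [Nat.card_Icc]
      _ ≤ _ := Finset.card_le_card (by
          intro j hj
          rw [Finset.mem_Icc] at hj
          rw [Finset.mem_filter, Finset.mem_Icc]
          exact ⟨⟨le_trans hi1 hj.1, hj.2⟩, hsa i j hi1 hj.1 hj.2⟩)
  set VB := Submodule.span ℝ (Set.range fun k : SB => (hHB.eigenvectorBasis k : EuclideanSpace ℝ (Fin n))) with hVB
  set VA := Submodule.span ℝ (Set.range fun k : SA => (hHA.eigenvectorBasis k : EuclideanSpace ℝ (Fin n))) with hVA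
  have hrB : Module.finrank ℝ VB = SB.card := finrank_span_basis _ _
  have hrA : Module.finrank ℝ VA = SA.card := finrank_span_basis _ _
  have hsup : Module.finrank ℝ ↥(VB ⊔ VA) ≤ n := by
    refine le_trans (Submodule.finrank_le _) ?_
    rw [finrank_euclideanSpace]
    simp
  have heq := Submodule.finrank_sup_add_finrank_inf_eq VB VA
  have hinf : 0 < Module.finrank ℝ ↥(VB ⊓ VA) := by omega
  have : Nontrivial ↥(VB ⊓ VA) := Module.nontrivial_of_finrank_pos hinf
  obtain ⟨⟨x, hxmem⟩, hxne0⟩ := exists_ne (0 : ↥(VB ⊓ VA))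
  have hxne : x ≠ 0 := by
    intro h
    exact hxne0 (Subtype.ext h)
  set y : EuclideanSpace ℝ (Fin n) := ‖x‖⁻¹ • x with hy
  have hy1 : ‖y‖ = 1 := norm_smul_inv_norm hxne
  have hysum : ∑ k, y k ^ 2 = 1 := by
    have h1 := enorm_eq y
    rw [hy1] at h1
    have h2 : 0 ≤ ∑ k, y k ^ 2 := Finset.sum_nonneg fun k _ => sq_nonneg _
    nlinarith [Real.sq_sqrt h2]
  have hymem : y ∈ VB ⊓ VA := Submodule.smul_mem _ _ hxmem
  have h1 : b i ≤ ∑ k, y k * (B.mulVec y) k :=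
    quad_bound_ge hB hHB (b i) SB
      (fun k hk => (Finset.mem_filter.mp hk).2) y hysum hymem.1
  have h2 : ∑ k, y k * (A.mulVec y) k ≤ a i :=
    quad_bound_le hA hHA (a i) SA
      (fun k hk => (Finset.mem_filter.mp hk).2) y hysum hymem.2
  linarith [hq y hysum]

end DK

/-- A variant of the Davis–Kahan theorem. `M₁` and `M₂` are real symmetric `n × n`
matrices; `lam₁ j` (resp. `lam₂ j`), for `1 ≤ j ≤ n`, are their eigenvalues listed in
nonincreasing order (encoded via the characteristic polynomial), with `M₁` positive
semidefinite. If the `i`-th eigenvalue of `M₁` is separated from its neighbours by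
`ϑ > 0` (with the conventions `λ₀ = ∞`, `λ_{n+1} = 0`), and `u`, `û` are unit
eigenvectors of `M₁` and `M₂` for their respective `i`-th eigenvalues with `⟨u, û⟩ ≥ 0`,
then `‖û − u‖₂ ≤ 2^{3/2} ϑ⁻¹ ‖M₁ − M₂‖_op`. -/
theorem davis_kahan_variant (n : ℕ) (M₁ M₂ : Matrix (Fin n) (Fin n) ℝ)
    (hM₁ : M₁.IsSymm) (hM₂ : M₂.IsSymm)
    (lam₁ lam₂ : ℕ → ℝ)
    (hsort₁ : ∀ j k : ℕ, 1 ≤ j → j ≤ k → k ≤ n → lam₁ k ≤ lam₁ j)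
    (hsort₂ : ∀ j k : ℕ, 1 ≤ j → j ≤ k → k ≤ n → lam₂ k ≤ lam₂ j)
    (hpsd : 0 ≤ lam₁ n)
    (hchar₁ : M₁.charpoly = ∏ j ∈ Finset.Icc 1 n, (X - C (lam₁ j)))
    (hchar₂ : M₂.charpoly = ∏ j ∈ Finset.Icc 1 n, (X - C (lam₂ j)))
    (i : ℕ) (hi1 : 1 ≤ i) (hin : i ≤ n)
    (ϑ : ℝ) (hϑ : 0 < ϑ)
    (hgap_left : 2 ≤ i → ϑ ≤ lam₁ (i - 1) - lam₁ i)
    (hgap_right : i < n → ϑ ≤ lam₁ i - lam₁ (i + 1))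
    (hgap_last : i = n → ϑ ≤ lam₁ n)
    (u uhat : Fin n → ℝ)
    (hu : ∑ k, u k ^ 2 = 1) (huhat : ∑ k, uhat k ^ 2 = 1)
    (heig₁ : M₁.mulVec u = lam₁ i • u)
    (heig₂ : M₂.mulVec uhat = lam₂ i • uhat)
    (hinner : 0 ≤ ∑ k, u k * uhat k) :
    Real.sqrt (∑ k, (uhat k - u k) ^ 2)
      ≤ 2 ^ ((3 : ℝ) / 2) * ϑ⁻¹ * opNorm (M₁ - M₂) := by
  classical
  have hHA := DK.isHermitian_of_isSymm hM₁
  set ev := hHA.eigenvalues with hev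
  set bb := hHA.eigenvectorBasis with hbb
  set ε := opNorm (M₁ - M₂) with hε
  have hEu : Real.sqrt (∑ k, ((M₁ - M₂).mulVec uhat k) ^ 2) ≤ ε :=
    DK.opNorm_bound _ uhat huhat
  have hε0 : 0 ≤ ε := le_trans (Real.sqrt_nonneg _) hEu
  have habs : ∀ y : Fin n → ℝ, ∑ k, y k ^ 2 = 1 →
      |∑ k, y k * ((M₁ - M₂).mulVec y) k| ≤ ε := by
    intro y hy
    have h1 : (∑ k, y k * ((M₁ - M₂).mulVec y) k) ^ 2
        ≤ (∑ k, y k ^ 2) * (∑ k, ((M₁ - M₂).mulVec y k) ^ 2) :=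
      Finset.sum_mul_sq_le_sq_mul_sq _ _ _
    rw [hy, one_mul] at h1
    have h2 : |∑ k, y k * ((M₁ - M₂).mulVec y) k|
        ≤ Real.sqrt (∑ k, ((M₁ - M₂).mulVec y k) ^ 2) := by
      rw [← Real.sqrt_sq_eq_abs]
      exact Real.sqrt_le_sqrt h1
    exact le_trans h2 (DK.opNorm_bound _ y hy)
  have hsplitq : ∀ y : Fin n → ℝ, ∑ k, y k * (M₂.mulVec y) k
      = ∑ k, y k * (M₁.mulVec y) k - ∑ k, y k * ((M₁ - M₂).mulVec y) k := by
    intro y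
    rw [← Finset.sum_sub_distrib]
    refine Finset.sum_congr rfl fun k _ => ?_
    rw [Matrix.sub_mulVec, Pi.sub_apply]
    ring
  have hweyl1 : lam₂ i ≤ lam₁ i + ε := by
    apply DK.weyl_aux M₁ M₂ hM₁ hM₂ lam₁ lam₂ hsort₁ hsort₂ hchar₁ hchar₂ i hi1 hin
    intro y hy
    have h := abs_le.mp (habs y hy)
    rw [hsplitq y]
    linarith [h.1]
  have hweyl2 : lam₁ i ≤ lam₂ i + ε := by
    apply DK.weyl_aux M₂ M₁ hM₂ hM₁ lam₂ lam₁ hsort₂ hsort₁ hchar₂ hchar₁ i hi1 hin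
    intro y hy
    have h := abs_le.mp (habs y hy)
    have := hsplitq y
    linarith [h.2]
  have hsep : ∀ m : ℕ, 1 ≤ m → m ≤ n → m ≠ i → ϑ ≤ |lam₁ m - lam₁ i| := by
    intro m h1 h2 hne
    rcases lt_or_gt_of_ne hne with hlt | hgt
    · have hi2 : 2 ≤ i := by omega
      have hg := hgap_left hi2
      have hmono := hsort₁ m (i - 1) h1 (by omega) (by omega)
      rw [abs_of_nonneg (by linarith)]
      linarith
    · have hilt : i < n := by omega
      have hg := hgap_right hilt
      have hmono := hsort₁ (i + 1) m (by omega) (by omega) h2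
      rw [abs_of_nonpos (by linarith)]
      linarith
  have hms := DK.eigenvalues_multiset hHA lam₁ hchar₁
  have hfilt : ((Finset.Icc 1 n).filter fun j => lam₁ j = lam₁ i) = {i} := by
    ext j
    simp only [Finset.mem_filter, Finset.mem_Icc, Finset.mem_singleton]
    constructor
    · rintro ⟨⟨hj1, hj2⟩, hjeq⟩
      by_contra hne
      have h := hsep j hj1 hj2 hne
      rw [hjeq, sub_self, abs_zero] at h
      linarith
    · rintro rfl
      exact ⟨⟨hi1, hin⟩, rfl⟩
  have hcard1 : (Finset.univ.filter fun k => ev k = lam₁ i).card = 1 := by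
    rw [DK.card_filter_eq hms (fun t => t = lam₁ i), hfilt]
    exact Finset.card_singleton i
  obtain ⟨k₀, hk₀⟩ := Finset.card_eq_one.mp hcard1
  have hk₀eq : ev k₀ = lam₁ i := by
    have h : k₀ ∈ Finset.univ.filter fun k => ev k = lam₁ i := by
      rw [hk₀]; exact Finset.mem_singleton_self k₀
    exact (Finset.mem_filter.mp h).2
  have hk₀uniq : ∀ j : Fin n, ev j = lam₁ i → j = k₀ := by
    intro j hj
    have h : j ∈ Finset.univ.filter fun k => ev k = lam₁ i :=
      Finset.mem_filter.mpr ⟨Finset.mem_univ _, hj⟩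
    rw [hk₀] at h
    exact Finset.mem_singleton.mp h
  have hev_mem : ∀ j : Fin n, ∃ m, (1 ≤ m ∧ m ≤ n) ∧ lam₁ m = ev j := by
    intro j
    have h : ev j ∈ Multiset.map ev Finset.univ.val :=
      Multiset.mem_map_of_mem _ (Finset.mem_univ j)
    rw [← hms] at h
    obtain ⟨m, hm, hmeq⟩ := Multiset.mem_map.mp h
    have hm' : m ∈ Finset.Icc 1 n := hm
    rw [Finset.mem_Icc] at hm'
    exact ⟨m, hm', hmeq⟩
  have hgap_ev : ∀ j : Fin n, j ≠ k₀ → ϑ ^ 2 ≤ (ev j - lam₁ i) ^ 2 := by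
    intro j hj
    obtain ⟨m, ⟨hm1, hm2⟩, hmeq⟩ := hev_mem j
    have hmne : m ≠ i := by
      rintro rfl
      exact hj (hk₀uniq j hmeq.symm ▸ rfl)
    have h := hsep m hm1 hm2 hmne
    rw [hmeq] at h
    calc ϑ ^ 2 ≤ |ev j - lam₁ i| ^ 2 := pow_le_pow_left₀ hϑ.le h 2
      _ = (ev j - lam₁ i) ^ 2 := sq_abs _
  set d : Fin n → ℝ := fun j => ⟪bb j, (WithLp.toLp 2 uhat)⟫ with hd
  have hdsum : ∑ j, d j ^ 2 = 1 := by
    rw [hd]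
    rw [← DK.parseval hHA (WithLp.toLp 2 uhat)]
    exact huhat
  have hucoord : ∀ j : Fin n, j ≠ k₀ →
      ⟪bb j, (WithLp.toLp 2 u)⟫ = 0 := by
    intro j hj
    have h1 := DK.inner_basis_mulVec hM₁ hHA (WithLp.toLp 2 u) j
    rw [heig₁] at h1
    have h2 : ⟪bb j, (WithLp.toLp 2 (lam₁ i • u : Fin n → ℝ))⟫
        = lam₁ i * ⟪bb j, (WithLp.toLp 2 u)⟫ := by
      rw [DK.inner_eq_sum, DK.inner_eq_sum, Finset.mul_sum]
      exact Finset.sum_congr rfl fun k _ => by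
        simp only [WithLp.ofLp_toLp, Pi.smul_apply, smul_eq_mul]; ring
    rw [h2] at h1
    have hne : ev j ≠ lam₁ i := fun h => hj (hk₀uniq j h)
    have h3 : (ev j - lam₁ i) * ⟪bb j, (WithLp.toLp 2 u)⟫ = 0 := by
      rw [sub_mul, h1]; ring
    exact (mul_eq_zero.mp h3).resolve_left (sub_ne_zero.mpr hne)
  have hut : ⟪bb k₀, (WithLp.toLp 2 u)⟫ ^ 2 = 1 := by
    have h := DK.parseval hHA (WithLp.toLp 2 u)
    rw [hu, Finset.sum_eq_single k₀
      (fun j _ hj => by rw [hucoord j hj]; ring)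
      (fun h => absurd (Finset.mem_univ k₀) h)] at h
    exact h.symm
  set c := ∑ k, u k * uhat k with hc
  have hcd : c ^ 2 = d k₀ ^ 2 := by
    have hceq : c = ⟪bb k₀, (WithLp.toLp 2 u)⟫ * d k₀ := by
      rw [hc, ← DK.inner_eq_sum (WithLp.toLp 2 u) (WithLp.toLp 2 uhat),
        ← hHA.eigenvectorBasis.sum_inner_mul_inner (WithLp.toLp 2 u)
          (WithLp.toLp 2 uhat),
        Finset.sum_eq_single k₀
          (fun j _ hj => by
            rw [@real_inner_comm (EuclideanSpace ℝ (Fin n)) _ _ (hHA.eigenvectorBasis j) (WithLp.toLp 2 u),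
              hucoord j hj]
            ring)
          (fun h => absurd (Finset.mem_univ k₀) h),
        @real_inner_comm (EuclideanSpace ℝ (Fin n)) _ _ (hHA.eigenvectorBasis k₀) (WithLp.toLp 2 u)]
    rw [hceq, mul_pow, hut, one_mul]
  have hc2le : c ^ 2 ≤ 1 := by
    rw [hcd, ← hdsum]
    exact Finset.single_le_sum (f := fun j => d j ^ 2) (fun j _ => sq_nonneg _) (Finset.mem_univ k₀)
  have hc1 : c ≤ 1 := by nlinarith
  set v : Fin n → ℝ := fun k => M₁.mulVec uhat k - lam₁ i * uhat k with hv
  have hvcoord : ∀ j, ⟪bb j, (WithLp.toLp 2 v)⟫ = (ev j - lam₁ i) * d j := by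
    intro j
    have h1 := DK.inner_basis_mulVec hM₁ hHA (WithLp.toLp 2 uhat) j
    rw [DK.inner_eq_sum (bb j) (WithLp.toLp 2 v)]
    have h2 : ∑ k, bb j k * v k
        = (∑ k, bb j k * (M₁.mulVec uhat) k) - lam₁ i * ∑ k, bb j k * uhat k := by
      rw [Finset.mul_sum, ← Finset.sum_sub_distrib]
      exact Finset.sum_congr rfl fun k _ => by rw [hv]; ring
    rw [h2, ← DK.inner_eq_sum (bb j) (WithLp.toLp 2 (M₁.mulVec uhat)),
      ← DK.inner_eq_sum (bb j) (WithLp.toLp 2 uhat), h1, hd]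
    ring
  have hvsum : ∑ k, v k ^ 2 = ∑ j, ((ev j - lam₁ i) * d j) ^ 2 := by
    rw [DK.parseval hHA (WithLp.toLp 2 v)]
    exact Finset.sum_congr rfl fun j _ => by rw [hvcoord j]
  have hvlow : ϑ ^ 2 * (1 - c ^ 2) ≤ ∑ k, v k ^ 2 := by
    rw [hvsum, hcd]
    have hz : ((ev k₀ - lam₁ i) * d k₀) ^ 2 = 0 := by rw [hk₀eq]; ring
    have hdsplit : ∑ j ∈ Finset.univ.erase k₀, d j ^ 2 = 1 - d k₀ ^ 2 := by
      have h : d k₀ ^ 2 + ∑ j ∈ Finset.univ.erase k₀, d j ^ 2 = 1 := by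
        rw [← hdsum]
        exact Finset.add_sum_erase Finset.univ (fun j => d j ^ 2) (Finset.mem_univ k₀)
      linarith
    calc ϑ ^ 2 * (1 - d k₀ ^ 2) = ∑ j ∈ Finset.univ.erase k₀, ϑ ^ 2 * d j ^ 2 := by
          rw [← Finset.mul_sum, hdsplit]
      _ ≤ ∑ j ∈ Finset.univ.erase k₀, ((ev j - lam₁ i) * d j) ^ 2 := by
          refine Finset.sum_le_sum fun j hj => ?_
          have hg := hgap_ev j (Finset.ne_of_mem_erase hj)
          calc ϑ ^ 2 * d j ^ 2 ≤ (ev j - lam₁ i) ^ 2 * d j ^ 2 :=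
                mul_le_mul_of_nonneg_right hg (sq_nonneg _)
            _ = ((ev j - lam₁ i) * d j) ^ 2 := by ring
      _ ≤ ∑ j, ((ev j - lam₁ i) * d j) ^ 2 := by
          have h3 : ((ev k₀ - lam₁ i) * d k₀) ^ 2
              + ∑ j ∈ Finset.univ.erase k₀, ((ev j - lam₁ i) * d j) ^ 2
              = ∑ j, ((ev j - lam₁ i) * d j) ^ 2 :=
            Finset.add_sum_erase Finset.univ (fun j => ((ev j - lam₁ i) * d j) ^ 2)
              (Finset.mem_univ k₀)
          rw [← h3, hz, zero_add]
  have hvnorm : Real.sqrt (∑ k, v k ^ 2) ≤ 2 * ε := by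
    have hveq : ∑ k, v k ^ 2
        = ∑ k, ((M₁ - M₂).mulVec uhat k + (lam₂ i - lam₁ i) * uhat k) ^ 2 := by
      refine Finset.sum_congr rfl fun k _ => ?_
      have h2 : M₂.mulVec uhat k = lam₂ i * uhat k := by rw [heig₂]; rfl
      rw [hv]
      show (M₁.mulVec uhat k - lam₁ i * uhat k) ^ 2 = _
      rw [Matrix.sub_mulVec, Pi.sub_apply, h2]
      ring
    have htri := DK.sqrt_tri ((M₁ - M₂).mulVec uhat) (fun k => (lam₂ i - lam₁ i) * uhat k)
    have hsm := DK.sqrt_smul (lam₂ i - lam₁ i) uhat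
    rw [huhat, Real.sqrt_one, mul_one] at hsm
    have habsml : |lam₂ i - lam₁ i| ≤ ε := abs_le.mpr ⟨by linarith, by linarith⟩
    rw [hveq]
    calc Real.sqrt (∑ k, ((M₁ - M₂).mulVec uhat k + (lam₂ i - lam₁ i) * uhat k) ^ 2)
        ≤ Real.sqrt (∑ k, ((M₁ - M₂).mulVec uhat k) ^ 2)
          + Real.sqrt (∑ k, ((lam₂ i - lam₁ i) * uhat k) ^ 2) := htri
      _ ≤ ε + ε := add_le_add hEu (by rw [hsm]; exact habsml)
      _ = 2 * ε := by ring
  have h1c : 0 ≤ 1 - c ^ 2 := by linarith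
  have hkey : ϑ * Real.sqrt (1 - c ^ 2) ≤ 2 * ε := by
    have heq2 : ϑ * Real.sqrt (1 - c ^ 2) = Real.sqrt (ϑ ^ 2 * (1 - c ^ 2)) := by
      rw [Real.sqrt_mul (sq_nonneg ϑ), Real.sqrt_sq hϑ.le]
    rw [heq2]
    exact le_trans (Real.sqrt_le_sqrt hvlow) hvnorm
  have hdiff : ∑ k, (uhat k - u k) ^ 2 = 2 - 2 * c := by
    have hexp : ∑ k, (uhat k - u k) ^ 2
        = (∑ k, uhat k ^ 2) + (∑ k, u k ^ 2) - 2 * ∑ k, u k * uhat k := by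
      rw [← Finset.sum_add_distrib, Finset.mul_sum, ← Finset.sum_sub_distrib]
      exact Finset.sum_congr rfl fun k _ => by ring
    rw [hexp, hu, huhat, ← hc]
    ring
  have h32 : (2 : ℝ) ^ ((3 : ℝ) / 2) = 2 * Real.sqrt 2 := by
    rw [show (3 : ℝ) / 2 = 1 + 1 / 2 by norm_num,
      Real.rpow_add (by norm_num : (0 : ℝ) < 2), Real.rpow_one,
      ← Real.sqrt_eq_rpow]
  have hsqc : Real.sqrt (1 - c ^ 2) ≤ 2 * ε / ϑ := by
    rw [le_div_iff₀ hϑ]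
    calc Real.sqrt (1 - c ^ 2) * ϑ = ϑ * Real.sqrt (1 - c ^ 2) := by ring
      _ ≤ 2 * ε := hkey
  calc Real.sqrt (∑ k, (uhat k - u k) ^ 2) = Real.sqrt (2 - 2 * c) := by rw [hdiff]
    _ ≤ Real.sqrt (2 * (1 - c ^ 2)) := Real.sqrt_le_sqrt (by nlinarith)
    _ = Real.sqrt 2 * Real.sqrt (1 - c ^ 2) := Real.sqrt_mul (by norm_num) _
    _ ≤ Real.sqrt 2 * (2 * ε / ϑ) := mul_le_mul_of_nonneg_left hsqc (Real.sqrt_nonneg 2)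
    _ = 2 ^ ((3 : ℝ) / 2) * ϑ⁻¹ * ε := by
        rw [h32]
        field_simp
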